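/- Let X be a complete metric space, f: X → ℝ∪{+∞} lower semicontinuous, x̄ ∈ [f≤0], τ > 0. If f admits a local τ-error bound at x̄ (i.e. there exist δ, μ ∈ ]0,+∞[ with τ·d(x,[f≤0]) ≤ f(x) for all x ∈ B_δ(x̄) with 0 < f(x) < μ), then liminf_{x→x̄, f(x)↓0} |∇f|⋄(x) ≥ τ; conversely, if |∇f|⋄(x) ≥ τ for all x with f(x) > 0 near x̄ with f(x) near 0, then f admits a local τ-error bound at x̄. Hence the local error bound modulus Er f(x̄) := liminf_{x→x̄, f(x)>0} f(x)/d(x,[f≤0]) equals liminf_{x→x̄, f(x)↓0} |∇f|⋄(x). -/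

import Mathlib

open Filter EMetric Set Topology
open scoped ENNReal NNReal

noncomputable def epos (a : EReal) : ℝ≥0∞ := if a = ⊤ then ⊤ else ENNReal.ofReal a.toReal

noncomputable def nslope {X : Type*} [MetricSpace X] (f : X → EReal) (x : X) : ℝ≥0∞ :=
  ⨆ u ∈ {u : X | u ≠ x}, epos (f x - max (f u) 0) / edist u x

noncomputable def lslope {X : Type*} [MetricSpace X] (f : X → EReal) (x : X) : ℝ≥0∞ :=
  Filter.limsup (fun u => epos (f x - f u) / edist u x) (𝓝[≠] x)

set_option linter.unusedSectionVars false
set_option linter.unusedVariables false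

lemma epos_coe (r : ℝ) : epos (r : EReal) = ENNReal.ofReal r := by
  simp [epos]

lemma epos_bot : epos ⊥ = 0 := by simp [epos]

lemma epos_top : epos ⊤ = ⊤ := by simp [epos]

lemma ereal_toReal_nonneg {a : EReal} (h : 0 ≤ a) : 0 ≤ a.toReal := by
  rcases eq_or_ne a ⊤ with rfl | ht
  · simp
  · have hb : a ≠ ⊥ := fun hb => by simp [hb] at h
    have := EReal.toReal_le_toReal h (by simp) ht
    simpa using this

lemma ereal_toReal_pos {a : EReal} (h : 0 < a) (ht : a ≠ ⊤) : 0 < a.toReal := by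
  have hb : a ≠ ⊥ := fun hb => by simp [hb] at h
  rcases EReal.lt_iff_exists_real_btwn.1 h with ⟨t, h0t, hta⟩
  have : (t : EReal) ≤ (a.toReal : EReal) := by
    rw [EReal.coe_toReal ht hb]; exact le_of_lt hta
  have h0t' : (0:ℝ) < t := by exact_mod_cast h0t
  exact lt_of_lt_of_le h0t' (by exact_mod_cast this)

lemma epos_mono : Monotone epos := by
  intro a b hab
  rcases eq_or_ne b ⊤ with rfl | hb
  · simp [epos_top]
  rcases eq_or_ne a ⊥ with rfl | ha
  · simp [epos_bot]
  · have ha' : a ≠ ⊤ := fun h => hb (top_le_iff.1 (h ▸ hab))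
    simp only [epos, if_neg ha', if_neg hb]
    exact ENNReal.ofReal_le_ofReal (EReal.toReal_le_toReal hab ha hb)

lemma epos_pos {a : EReal} (h : 0 < a) : 0 < epos a := by
  rcases eq_or_ne a ⊤ with rfl | ht
  · simp [epos_top]
  · simp only [epos, if_neg ht]
    exact ENNReal.ofReal_pos.2 (ereal_toReal_pos h ht)

lemma ennreal_tsub_tele {a b c : ℝ≥0∞} (hba : b ≤ a) (hcb : c ≤ b) (ha : a ≠ ⊤) :
    a - b + (b - c) = a - c := by
  have hc : c ≠ ⊤ := ne_top_of_le_ne_top ha (le_trans hcb hba)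
  refine (ENNReal.eq_sub_of_add_eq hc ?_).symm.symm
  rw [add_assoc, tsub_add_cancel_of_le hcb, tsub_add_cancel_of_le hba]

section Ekeland

variable {X : Type*} [MetricSpace X] [CompleteSpace X]

lemma ekeland (g : X → ℝ≥0∞) (hg : LowerSemicontinuous g)
    (τ : ℝ≥0∞) (hτ0 : τ ≠ 0) (hτt : τ ≠ ⊤) (x0 : X) (h0 : g x0 ≠ ⊤) :
    ∃ y, g y + τ * edist y x0 ≤ g x0 ∧ ∀ u, g u + τ * edist u y ≤ g y → u = y := by
  set R : X → X → Prop := fun u v => g u + τ * edist u v ≤ g v with hR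
  have Rrefl : ∀ v, R v v := fun v => by simp [hR]
  have Rtrans : ∀ a b c, R a b → R b c → R a c := by
    intro a b c h1 h2
    have := add_le_add_right h1 (τ * edist b c)
    calc g a + τ * edist a c ≤ g a + τ * (edist a b + edist b c) := by
          gcongr; exact edist_triangle _ _ _
      _ = g a + τ * edist a b + τ * edist b c := by ring
      _ ≤ g b + τ * edist b c := by gcongr
      _ ≤ g c := h2
  have Rle : ∀ a b, R a b → g a ≤ g b := fun a b h => le_trans (le_add_right le_rfl) h
  -- the choice step
  have step : ∀ (n : ℕ) (v : X), ∃ u, g v ≠ ⊤ →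
      (R u v ∧ g u ≤ (⨅ w ∈ {w | R w v}, g w) + 2⁻¹ ^ n) := by
    intro n v
    by_cases hv : g v ≠ ⊤
    · have hmem : v ∈ {w | R w v} := Rrefl v
      have hm : (⨅ w ∈ {w | R w v}, g w) ≤ g v := biInf_le _ hmem
      have hmt : (⨅ w ∈ {w | R w v}, g w) ≠ ⊤ := ne_top_of_le_ne_top hv hm
      have hlt : (⨅ w ∈ {w | R w v}, g w) < (⨅ w ∈ {w | R w v}, g w) + 2⁻¹ ^ n :=
        ENNReal.lt_add_right hmt (pow_ne_zero n (by simp))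
      rw [iInf_lt_iff] at hlt
      obtain ⟨w, hw⟩ := hlt
      rw [iInf_lt_iff] at hw
      obtain ⟨hwv, hw2⟩ := hw
      exact ⟨w, fun _ => ⟨hwv, le_of_lt hw2⟩⟩
    · exact ⟨v, fun h => absurd h hv⟩
  choose F hF using step
  set seq : ℕ → X := fun n => Nat.rec x0 (fun n xn => F n xn) n with hseq
  have seq0 : seq 0 = x0 := rfl
  have seqS : ∀ n, seq (n + 1) = F n (seq n) := fun n => rfl
  have hfin : ∀ n, g (seq n) ≠ ⊤ := by
    intro n
    induction n with
    | zero => exact h0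
    | succ n ih =>
      rw [seqS]
      obtain ⟨h1, _⟩ := hF n (seq n) ih
      exact ne_top_of_le_ne_top ih (Rle _ _ h1)
  have hRstep : ∀ n, R (seq (n + 1)) (seq n) := by
    intro n; rw [seqS]; exact (hF n (seq n) (hfin n)).1
  have hbound : ∀ n, g (seq (n + 1)) ≤ (⨅ w ∈ {w | R w (seq n)}, g w) + 2⁻¹ ^ n := by
    intro n; rw [seqS]; exact (hF n (seq n) (hfin n)).2
  have hchain : ∀ m n, m ≤ n → R (seq n) (seq m) := by
    intro m n hmn
    induction n, hmn using Nat.le_induction with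
    | base => exact Rrefl _
    | succ n hmn ih => exact Rtrans _ _ _ (hRstep n) ih
  -- Cauchy
  have hantitone : ∀ m n, m ≤ n → g (seq n) ≤ g (seq m) := fun m n h => Rle _ _ (hchain m n h)
  have hedist : ∀ n, edist (seq n) (seq (n + 1)) ≤ (g (seq n) - g (seq (n + 1))) / τ := by
    intro n
    have h1 := hRstep n
    have h2 : τ * edist (seq (n+1)) (seq n) ≤ g (seq n) - g (seq (n+1)) :=
      ENNReal.le_sub_of_add_le_left (hfin (n+1)) h1
    rw [ENNReal.le_div_iff_mul_le (Or.inl hτ0) (Or.inl hτt)]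
    rw [edist_comm]
    rwa [mul_comm] at h2
  have htsum : (∑' n, (g (seq n) - g (seq (n + 1))) / τ) ≠ ⊤ := by
    have hsum : ∀ N : ℕ, ∑ i ∈ Finset.range N, (g (seq i) - g (seq (i + 1))) = g x0 - g (seq N) := by
      intro N
      induction N with
      | zero => simp [seq0]
      | succ N ih =>
        rw [Finset.sum_range_succ, ih]
        exact ennreal_tsub_tele (hantitone 0 N (Nat.zero_le N)) (hantitone N (N+1) (by omega))
          (h0)
    have h1 : (∑' n, (g (seq n) - g (seq (n + 1)))) ≤ g x0 := by
      rw [ENNReal.tsum_eq_iSup_sum]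
      apply iSup_le
      intro s
      calc ∑ i ∈ s, (g (seq i) - g (seq (i + 1)))
          ≤ ∑ i ∈ Finset.range (s.sup id + 1), (g (seq i) - g (seq (i + 1))) :=
            Finset.sum_le_sum_of_subset (fun i hi => Finset.mem_range.2
              (Nat.lt_succ_of_le (Finset.le_sup (f := id) hi)))
        _ = g x0 - g (seq (s.sup id + 1)) := hsum _
        _ ≤ g x0 := tsub_le_self
    have : (∑' n, (g (seq n) - g (seq (n + 1))) / τ) = (∑' n, (g (seq n) - g (seq (n + 1)))) * τ⁻¹ := by
      simp_rw [div_eq_mul_inv]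
      exact ENNReal.tsum_mul_right
    rw [this]
    exact ENNReal.mul_ne_top (ne_top_of_le_ne_top h0 h1) (ENNReal.inv_ne_top.2 hτ0)
  have hcauchy : CauchySeq seq := cauchySeq_of_edist_le_of_tsum_ne_top _ hedist htsum
  obtain ⟨y, hy⟩ := cauchySeq_tendsto_of_complete hcauchy
  -- y is related to all seq n
  have hclosed : ∀ v : X, IsClosed {u | R u v} := by
    intro v
    have hφ : LowerSemicontinuous (fun u => g u + τ * edist u v) := by
      apply LowerSemicontinuous.add hg
      exact ((ENNReal.continuous_const_mul hτt).comp
        (Continuous.edist continuous_id continuous_const)).lowerSemicontinuous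
    exact hφ.isClosed_preimage (g v)
  have hRy : ∀ n, R y (seq n) := by
    intro n
    apply (hclosed (seq n)).mem_of_tendsto hy
    filter_upwards [eventually_ge_atTop n] with k hk
    exact hchain n k hk
  have hyfin : g y ≠ ⊤ := ne_top_of_le_ne_top h0 (Rle _ _ (hRy 0))
  refine ⟨y, by simpa [seq0] using hRy 0, ?_⟩
  intro u hu
  have hu' : R u y := hu
  have hgy_le : g y ≤ g u := by
    rcases eq_or_ne (g u) ⊤ with h | h
    · exact h ▸ le_top
    apply ENNReal.le_of_forall_pos_le_add
    intro ε hε _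
    obtain ⟨n, hn⟩ := ENNReal.exists_inv_two_pow_lt (ENNReal.coe_ne_zero.2 (ne_of_gt hε))
    have h1 : g y ≤ g (seq (n + 1)) := Rle _ _ (hRy (n + 1))
    have h2 : (⨅ w ∈ {w | R w (seq n)}, g w) ≤ g u :=
      biInf_le _ (Rtrans _ _ _ hu' (hRy n))
    calc g y ≤ (⨅ w ∈ {w | R w (seq n)}, g w) + 2⁻¹ ^ n := le_trans h1 (hbound n)
      _ ≤ g u + 2⁻¹ ^ n := by gcongr
      _ ≤ g u + ε := add_le_add le_rfl (le_of_lt hn)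
  have hufin : g u ≠ ⊤ := ne_top_of_le_ne_top hyfin (le_trans (le_add_right le_rfl) hu')
  have : g u + τ * edist u y ≤ g u + 0 := by
    calc g u + τ * edist u y ≤ g y := hu'
      _ ≤ g u := hgy_le
      _ = g u + 0 := (add_zero _).symm
  have h0' : τ * edist u y ≤ 0 := (ENNReal.add_le_add_iff_left hufin).1 this
  have : edist u y = 0 := by
    rcases mul_eq_zero.1 (le_antisymm h0' (zero_le)) with h | h
    · exact absurd h hτ0
    · exact h
  exact edist_eq_zero.1 this

end Ekeland

section Parts
variable {X : Type*} [MetricSpace X]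

lemma lsc_gpos {Y : Type*} [TopologicalSpace Y] (f : Y → EReal) (hf : LowerSemicontinuous f) :
    LowerSemicontinuous (fun u => epos (max (f u) 0)) := by
  rw [lowerSemicontinuous_iff_isClosed_preimage]
  intro c
  rcases eq_or_ne c ⊤ with rfl | hc
  · have : (fun u => epos (max (f u) 0)) ⁻¹' Set.Iic ⊤ = Set.univ := by
      ext u; simp
    rw [this]; exact isClosed_univ
  · have heq : (fun u => epos (max (f u) 0)) ⁻¹' Set.Iic c
        = {u | f u ≤ ((c.toReal : ℝ) : EReal)} := by
    -- epos (max (f u) 0) ≤ c ↔ f u ≤ c.toReal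
      ext u
      simp only [Set.mem_preimage, Set.mem_Iic, Set.mem_setOf_eq]
      constructor
      · intro h
        rcases eq_or_ne (max (f u) 0) ⊤ with he | he
        · rw [he, epos_top] at h
          exact absurd (top_le_iff.1 h) hc
        · have hb : max (f u) 0 ≠ ⊥ := ne_of_gt (lt_of_lt_of_le (by simp) (le_max_right _ _))
          rw [epos, if_neg he] at h
          have := (ENNReal.ofReal_le_iff_le_toReal hc).1 h
          calc f u ≤ max (f u) 0 := le_max_left _ _
            _ = (((max (f u) 0).toReal : ℝ) : EReal) := (EReal.coe_toReal he hb).symm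
            _ ≤ ((c.toReal : ℝ) : EReal) := by exact_mod_cast this
      · intro h
        have h2 : max (f u) 0 ≤ ((c.toReal : ℝ) : EReal) := by
          apply max_le h
          exact_mod_cast ENNReal.toReal_nonneg
        calc epos (max (f u) 0) ≤ epos ((c.toReal : ℝ) : EReal) := epos_mono h2
          _ = ENNReal.ofReal c.toReal := epos_coe _
          _ = c := ENNReal.ofReal_toReal hc
    rw [heq]
    exact hf.isClosed_preimage _

variable [CompleteSpace X]

/-- Key step of part 1: the error bound at a point gives the slope lower bound. -/
lemma tau_le_nslope (f : X → EReal) (hlsc : LowerSemicontinuous f)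
    (xb : X) (hxb : f xb ≤ 0) {τ : ℝ} {x : X}
    (hfx : 0 < f x)
    (hEB : ENNReal.ofReal τ * EMetric.infEdist x {v | f v ≤ 0} ≤ epos (f x)) :
    ENNReal.ofReal τ ≤ nslope f x := by
  set S : Set X := {v | f v ≤ 0} with hS
  have hSc : IsClosed S := hlsc.isClosed_preimage (0 : EReal)
  have hxS : x ∉ S := fun h => absurd hfx (not_lt.2 h)
  have hD0 : EMetric.infEdist x S ≠ 0 := by
    rw [← pos_iff_ne_zero, show ∀ (y : X) (T : Set X), EMetric.infEdist y T = Metric.infEDist y T from fun _ _ => rfl,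
      EMetric.infEdist_pos_iff_notMem_closure]
    rwa [hSc.closure_eq]
  have hDt : EMetric.infEdist x S ≠ ⊤ :=
    ne_top_of_le_ne_top (edist_ne_top x xb) (EMetric.infEdist_le_edist_of_mem hxb)
  by_contra hcon
  push_neg at hcon
  set c : ℝ≥0∞ := nslope f x with hc
  have hct : c ≠ ⊤ := ne_top_of_lt (lt_of_lt_of_le hcon (le_top))
  have h1 : c * EMetric.infEdist x S < epos (f x) := by
    calc c * EMetric.infEdist x S < ENNReal.ofReal τ * EMetric.infEdist x S := by
          exact (ENNReal.mul_lt_mul_iff_left hD0 hDt).2 hcon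
      _ ≤ epos (f x) := hEB
  have h2 : EMetric.infEdist x S < epos (f x) / c := by
    rw [ENNReal.lt_div_iff_mul_lt (Or.inr hDt) (Or.inl hct)]
    rwa [mul_comm] at h1
  obtain ⟨u, huS, hue⟩ := EMetric.infEdist_lt_iff.1 h2
  have hux : u ≠ x := fun h => hxS (h ▸ huS)
  have he0 : edist x u ≠ 0 := by
    rw [edist_comm]
    exact fun h => hux (edist_eq_zero.1 h)
  have het : edist x u ≠ ⊤ := edist_ne_top _ _
  have h3 : edist x u * c < epos (f x) :=
    (ENNReal.lt_div_iff_mul_lt (Or.inr het) (Or.inl hct)).1 hue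
  have h4 : c < epos (f x) / edist x u := by
    rw [ENNReal.lt_div_iff_mul_lt (Or.inl he0) (Or.inl het)]
    rwa [mul_comm] at h3
  have h5 : epos (f x) / edist x u ≤ c := by
    have hterm : epos (f x - max (f u) 0) / edist u x ≤ nslope f x :=
      le_biSup (fun u => epos (f x - max (f u) 0) / edist u x) (hux : u ∈ {u : X | u ≠ x})
    have hmax : max (f u) 0 = 0 := max_eq_right huS
    rw [hc]
    calc epos (f x) / edist x u = epos (f x - max (f u) 0) / edist u x := by
          rw [hmax, sub_zero, edist_comm]
      _ ≤ nslope f x := hterm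
  exact absurd h4 (not_lt.2 h5)
end Parts

section Parts2
variable {X : Type*} [MetricSpace X]

lemma eventually_of_ball2 (f : X → EReal) (xb : X) {p : X → Prop} {δ μ : ℝ}
    (hδ : 0 < δ) (hμ : 0 < μ)
    (h : ∀ x ∈ EMetric.ball xb (ENNReal.ofReal δ), 0 < f x → f x < (μ : EReal) → p x) :
    ∀ᶠ x in nhds xb ⊓ Filter.principal {x | 0 < f x} ⊓ Filter.comap f (nhds (0:EReal)), p x := by
  have h1 : ∀ᶠ x in nhds xb ⊓ Filter.principal {x | 0 < f x} ⊓ Filter.comap f (nhds (0:EReal)),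
      x ∈ EMetric.ball xb (ENNReal.ofReal δ) :=
    Filter.Eventually.filter_mono (le_trans inf_le_left inf_le_left)
      (EMetric.ball_mem_nhds xb (ENNReal.ofReal_pos.2 hδ))
  have h2 : ∀ᶠ x in nhds xb ⊓ Filter.principal {x | 0 < f x} ⊓ Filter.comap f (nhds (0:EReal)),
      0 < f x :=
    Filter.Eventually.filter_mono (le_trans inf_le_left inf_le_right)
      (Filter.eventually_principal.2 fun x hx => hx)
  have h3 : ∀ᶠ x in nhds xb ⊓ Filter.principal {x | 0 < f x} ⊓ Filter.comap f (nhds (0:EReal)),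
      f x < (μ : EReal) := by
    apply Filter.Eventually.filter_mono inf_le_right
    have hmem : Set.Iio ((μ:ℝ) : EReal) ∈ nhds (0 : EReal) :=
      Iio_mem_nhds (by exact_mod_cast hμ)
    exact Filter.preimage_mem_comap hmem
  filter_upwards [h1, h2, h3] with x hx1 hx2 hx3
  exact h x hx1 hx2 hx3

lemma eventually_of_ball1 (f : X → EReal) (xb : X) {p : X → Prop} {δ : ℝ}
    (hδ : 0 < δ)
    (h : ∀ x ∈ EMetric.ball xb (ENNReal.ofReal δ), 0 < f x → p x) :
    ∀ᶠ x in nhds xb ⊓ Filter.principal {x | 0 < f x}, p x := by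
  have h1 : ∀ᶠ x in nhds xb ⊓ Filter.principal {x | 0 < f x},
      x ∈ EMetric.ball xb (ENNReal.ofReal δ) :=
    Filter.Eventually.filter_mono inf_le_left
      (EMetric.ball_mem_nhds xb (ENNReal.ofReal_pos.2 hδ))
  have h2 : ∀ᶠ x in nhds xb ⊓ Filter.principal {x | 0 < f x}, 0 < f x :=
    Filter.Eventually.filter_mono inf_le_right
      (Filter.eventually_principal.2 fun x hx => hx)
  filter_upwards [h1, h2] with x hx1 hx2
  exact h x hx1 hx2

lemma exists_of_eventually1 (f : X → EReal) (xb : X) {p : X → Prop}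
    (h : ∀ᶠ x in nhds xb ⊓ Filter.principal {x | 0 < f x}, p x) :
    ∃ δ > (0:ℝ), ∀ x ∈ EMetric.ball xb (ENNReal.ofReal δ), 0 < f x → p x := by
  rw [Filter.eventually_inf_principal] at h
  obtain ⟨ε, hε, hball⟩ := EMetric.mem_nhds_iff.1 h
  have hε1 : min ε 1 ≠ 0 := ne_of_gt (lt_min hε zero_lt_one)
  have hε2 : min ε 1 ≠ ⊤ := ne_top_of_le_ne_top ENNReal.one_ne_top (min_le_right _ _)
  refine ⟨(min ε 1).toReal, ENNReal.toReal_pos hε1 hε2, ?_⟩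
  intro x hx hfx
  have hx' : x ∈ EMetric.ball xb ε := by
    change edist x xb < _ at hx
    change edist x xb < ε
    rw [ENNReal.ofReal_toReal hε2] at hx
    exact lt_of_lt_of_le hx (min_le_left _ _)
  exact hball hx' hfx

lemma exists_of_eventually2 (f : X → EReal) (hbot : ∀ u, f u ≠ ⊥) (xb : X) {p : X → Prop}
    (h : ∀ᶠ x in nhds xb ⊓ Filter.principal {x | 0 < f x} ⊓ Filter.comap f (nhds (0:EReal)), p x) :
    ∃ δ > (0:ℝ), ∃ μ > (0:ℝ), ∀ x ∈ EMetric.ball xb (ENNReal.ofReal δ),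
      0 < f x → f x < (μ:EReal) → p x := by
  rw [Filter.eventually_iff, Filter.mem_inf_iff] at h
  obtain ⟨t1, ht1, t2, ht2, hs⟩ := h
  obtain ⟨W, hW, hWt⟩ := Filter.mem_comap.1 ht2
  have hcoe : (fun r : ℝ => (r : EReal)) ⁻¹' W ∈ nhds (0:ℝ) := by
    have hc : ContinuousAt (fun r : ℝ => (r : EReal)) 0 := continuous_coe_real_ereal.continuousAt
    have h0 : ((0:ℝ) : EReal) = (0 : EReal) := rfl
    exact hc.preimage_mem_nhds (h0 ▸ hW)
  obtain ⟨μ, hμ, hballμ⟩ := Metric.mem_nhds_iff.1 hcoe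
  rw [Filter.mem_inf_principal] at ht1
  obtain ⟨ε, hε, hbε⟩ := EMetric.mem_nhds_iff.1 ht1
  have hε1 : min ε 1 ≠ 0 := ne_of_gt (lt_min hε zero_lt_one)
  have hε2 : min ε 1 ≠ ⊤ := ne_top_of_le_ne_top ENNReal.one_ne_top (min_le_right _ _)
  refine ⟨(min ε 1).toReal, ENNReal.toReal_pos hε1 hε2, μ, hμ, ?_⟩
  intro x hx hfx hfμ
  have hx' : x ∈ EMetric.ball xb ε := by
    change edist x xb < _ at hx
    change edist x xb < ε
    rw [ENNReal.ofReal_toReal hε2] at hx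
    exact lt_of_lt_of_le hx (min_le_left _ _)
  have hx1 : x ∈ t1 := hbε hx' hfx
  have hfxt : f x ≠ ⊤ := ne_top_of_lt hfμ
  have hfxr : f x = (((f x).toReal : ℝ) : EReal) := (EReal.coe_toReal hfxt (hbot x)).symm
  have h1 : (f x).toReal < μ := by
    rw [hfxr] at hfμ
    exact_mod_cast hfμ
  have h2 : 0 < (f x).toReal := ereal_toReal_pos hfx hfxt
  have hfW : f x ∈ W := by
    have hmem : ((f x).toReal : ℝ) ∈ Metric.ball (0:ℝ) μ := by
      rw [Metric.mem_ball, Real.dist_eq, sub_zero, abs_of_pos h2]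
      exact h1
    rw [hfxr]
    exact hballμ hmem
  exact (Set.ext_iff.1 hs x).2 ⟨hx1, hWt hfW⟩

variable [CompleteSpace X]

/-- Part 1: error bound implies liminf of slopes at least τ. -/
lemma eb_liminf (f : X → EReal) (hlsc : LowerSemicontinuous f)
    (xb : X) (hxb : f xb ≤ 0) {τ : ℝ} (hτ : 0 < τ)
    (h : ∃ δ > (0:ℝ), ∃ μ > (0:ℝ), ∀ x ∈ EMetric.ball xb (ENNReal.ofReal δ),
        0 < f x → f x < (μ : EReal) →
        ENNReal.ofReal τ * EMetric.infEdist x {v | f v ≤ 0} ≤ epos (f x)) :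
    ENNReal.ofReal τ ≤ Filter.liminf (fun x => nslope f x)
        (nhds xb ⊓ Filter.principal {x | 0 < f x} ⊓ Filter.comap f (nhds (0 : EReal))) := by
  obtain ⟨δ, hδ, μ, hμ, hEB⟩ := h
  refine Filter.le_liminf_of_le (by isBoundedDefault) ?_
  apply eventually_of_ball2 f xb hδ hμ
  intro x hx hfx hfμ
  exact tau_le_nslope f hlsc xb hxb hfx (hEB x hx hfx hfμ)

/-- Part 2: slopes at least τ near the point imply the error bound. -/
lemma slope_eb (f : X → EReal) (hbot : ∀ u, f u ≠ ⊥) (hlsc : LowerSemicontinuous f)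
    (xb : X) (hxb : f xb ≤ 0) {τ : ℝ} (hτ : 0 < τ)
    (H : ∃ δ > (0:ℝ), ∃ μ > (0:ℝ), ∀ x ∈ EMetric.ball xb (ENNReal.ofReal δ),
        0 < f x → f x < (μ:EReal) → ENNReal.ofReal τ ≤ nslope f x) :
    ∃ δ > (0:ℝ), ∃ μ > (0:ℝ), ∀ x ∈ EMetric.ball xb (ENNReal.ofReal δ),
        0 < f x → f x < (μ:EReal) →
        ENNReal.ofReal τ * EMetric.infEdist x {v | f v ≤ 0} ≤ epos (f x) := by
  obtain ⟨δ, hδ, μ, hμ, H⟩ := H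
  refine ⟨δ/2, by linarith, μ, hμ, ?_⟩
  intro x hx hfx hfμ
  set S : Set X := {v | f v ≤ 0} with hS
  have hSc : IsClosed S := hlsc.isClosed_preimage (0:EReal)
  set D := EMetric.infEdist x S with hD
  have hxS : x ∉ S := fun h => absurd hfx (not_lt.2 h)
  have hD0 : D ≠ 0 := by
    rw [hD, ← pos_iff_ne_zero, show ∀ (y : X) (T : Set X), EMetric.infEdist y T = Metric.infEDist y T from fun _ _ => rfl,
      EMetric.infEdist_pos_iff_notMem_closure]
    rwa [hSc.closure_eq]
  have hDle : D ≤ edist x xb := EMetric.infEdist_le_edist_of_mem hxb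
  have hDt : D ≠ ⊤ := ne_top_of_le_ne_top (edist_ne_top x xb) hDle
  have hfxt : f x ≠ ⊤ := ne_top_of_lt hfμ
  have hepos_ne : epos (f x) ≠ ⊤ := by rw [epos, if_neg hfxt]; exact ENNReal.ofReal_ne_top
  have main : ∀ σ : ℝ, 0 < σ → σ < τ → ENNReal.ofReal σ * D ≤ epos (f x) := by
    intro σ hσ hστ
    by_contra hcon
    push_neg at hcon
    set g : X → ℝ≥0∞ := fun u => epos (max (f u) 0) with hg
    have hgl : LowerSemicontinuous g := lsc_gpos f hlsc
    have hgx : g x = epos (f x) := by rw [hg]; simp only; rw [max_eq_left hfx.le]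
    have hσ0 : ENNReal.ofReal σ ≠ 0 := ne_of_gt (ENNReal.ofReal_pos.2 hσ)
    obtain ⟨y, hy1, hy2⟩ := ekeland g hgl (ENNReal.ofReal σ) hσ0 ENNReal.ofReal_ne_top x
      (by rw [hgx]; exact hepos_ne)
    rw [hgx] at hy1
    have hsle : ENNReal.ofReal σ * edist y x ≤ epos (f x) := le_trans (le_add_left le_rfl) hy1
    have hed : edist y x < D := by
      have h' : ENNReal.ofReal σ * edist y x < ENNReal.ofReal σ * D := lt_of_le_of_lt hsle hcon
      exact (ENNReal.mul_lt_mul_iff_right hσ0 ENNReal.ofReal_ne_top).1 h'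
    have hyS : y ∉ S := by
      intro hyS
      have h1 : D ≤ EMetric.infEdist y S + edist x y := EMetric.infEdist_le_infEdist_add_edist
      rw [show EMetric.infEdist y S = 0 from EMetric.infEdist_zero_of_mem hyS, zero_add, edist_comm] at h1
      exact absurd (lt_of_lt_of_le hed h1) (lt_irrefl _)
    have hfy : 0 < f y := not_le.1 hyS
    have hgyx : g y ≤ epos (f x) := le_trans (le_add_right le_rfl) hy1
    have hgy : g y = epos (f y) := by rw [hg]; simp only; rw [max_eq_left hfy.le]
    have hfyt : f y ≠ ⊤ := by
      intro h'; rw [hgy, h', epos_top] at hgyx; exact hepos_ne (top_le_iff.1 hgyx)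
    have hfyμ : f y < (μ:EReal) := by
      have h1 : (f y).toReal ≤ (f x).toReal := by
        rw [hgy] at hgyx
        rw [epos, if_neg hfyt, epos, if_neg hfxt] at hgyx
        have hx0 : 0 < (f x).toReal := ereal_toReal_pos hfx hfxt
        exact (ENNReal.ofReal_le_ofReal_iff hx0.le).1 hgyx
      have h2 : (f x).toReal < μ := by
        have h3 := hfμ
        rw [← EReal.coe_toReal hfxt (hbot x)] at h3
        exact_mod_cast h3
      calc f y = (((f y).toReal : ℝ) : EReal) := (EReal.coe_toReal hfyt (hbot y)).symm
        _ < ((μ : ℝ) : EReal) := by exact_mod_cast lt_of_le_of_lt h1 h2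
    have hyb : y ∈ EMetric.ball xb (ENNReal.ofReal δ) := by
      have hxball : edist x xb < ENNReal.ofReal (δ/2) := hx
      have h1 : edist y x < ENNReal.ofReal (δ/2) := lt_of_lt_of_le hed (le_of_lt
        (lt_of_le_of_lt hDle hxball))
      calc edist y xb ≤ edist y x + edist x xb := edist_triangle _ _ _
        _ < ENNReal.ofReal (δ/2) + ENNReal.ofReal (δ/2) := ENNReal.add_lt_add h1 hxball
        _ = ENNReal.ofReal δ := by
            rw [← ENNReal.ofReal_add (by linarith) (by linarith)]
            norm_num
    have hτy := H y hyb hfy hfyμ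
    have hns : nslope f y ≤ ENNReal.ofReal σ := by
      apply iSup₂_le
      intro u hu
      have hkey : ¬ (g u + ENNReal.ofReal σ * edist u y ≤ g y) := fun h' => hu (hy2 u h')
      push_neg at hkey
      have hsub : g y - g u ≤ ENNReal.ofReal σ * edist u y := by
        rw [tsub_le_iff_left]
        exact le_of_lt hkey
      have hterm : epos (f y - max (f u) 0) ≤ g y - g u := by
        rcases eq_or_ne (max (f u) 0) ⊤ with he | he
        · rw [he, sub_eq_add_neg, EReal.neg_top, EReal.add_bot, epos_bot]
          exact zero_le
        · have hb : max (f u) 0 ≠ ⊥ :=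
            ne_of_gt (lt_of_lt_of_le (by simp) (le_max_right (f u) 0))
          have hq : 0 ≤ (max (f u) 0).toReal := ereal_toReal_nonneg (le_max_right _ _)
          have heq : f y - max (f u) 0
              = (((f y).toReal - (max (f u) 0).toReal : ℝ) : EReal) := by
            rw [EReal.coe_sub, EReal.coe_toReal hfyt (hbot y), EReal.coe_toReal he hb]
          rw [heq, epos_coe, ENNReal.ofReal_sub _ hq]
          apply le_of_eq
          have e1 : g y = ENNReal.ofReal (f y).toReal := by rw [hgy, epos, if_neg hfyt]
          have e2 : g u = ENNReal.ofReal ((max (f u) 0).toReal) := by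
            show epos (max (f u) 0) = _
            rw [epos, if_neg he]
          rw [e1, e2]
      have hdiv : epos (f y - max (f u) 0) / edist u y ≤ ENNReal.ofReal σ := by
        rw [ENNReal.div_le_iff (fun h' => hu (edist_eq_zero.1 h')) (edist_ne_top _ _)]
        calc epos (f y - max (f u) 0) ≤ g y - g u := hterm
          _ ≤ ENNReal.ofReal σ * edist u y := hsub
      exact hdiv
    have hfin : ENNReal.ofReal τ ≤ ENNReal.ofReal σ := le_trans hτy hns
    rw [ENNReal.ofReal_le_ofReal_iff hσ.le] at hfin
    linarith
  apply ENNReal.le_of_forall_nnreal_lt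
  intro r hr
  rcases eq_or_ne (r:ℝ≥0∞) 0 with h0 | h0
  · rw [h0]; exact zero_le
  have hrD : (r:ℝ≥0∞)/D < ENNReal.ofReal τ := by
    rw [ENNReal.div_lt_iff (Or.inl hD0) (Or.inl hDt)]
    exact hr
  obtain ⟨s, hs0, hs1, hs2⟩ := ENNReal.lt_iff_exists_real_btwn.1 hrD
  have hsτ : s < τ := by rwa [ENNReal.ofReal_lt_ofReal_iff hτ] at hs2
  have hspos : 0 < s := by
    by_contra h'
    push_neg at h'
    rw [ENNReal.ofReal_eq_zero.2 h'] at hs1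
    exact absurd hs1 (not_lt.2 (zero_le))
  calc (r:ℝ≥0∞) = (r:ℝ≥0∞)/D * D := (ENNReal.div_mul_cancel hD0 hDt).symm
    _ ≤ ENNReal.ofReal s * D := mul_le_mul_left (le_of_lt hs1) D
    _ ≤ epos (f x) := main s hspos hsτ

end Parts2

/-- characterization of local `τ`-error bounds via the nonlocal lslope, and the
formula for the error bound modulus:
`Er f(x̄) = liminf_{x→x̄, f(x)↓0} |∇f|⋄(x)`. -/
theorem error_bound_modulus_eq {X : Type*} [MetricSpace X] [CompleteSpace X]
    (f : X → EReal) (hbot : ∀ u, f u ≠ ⊥) (hlsc : LowerSemicontinuous f)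
    (xb : X) (hxb : f xb ≤ 0) :
    (∀ τ : ℝ, 0 < τ →
      ((∃ δ > (0 : ℝ), ∃ μ > (0 : ℝ), ∀ x ∈ EMetric.ball xb (ENNReal.ofReal δ),
          0 < f x → f x < (μ : EReal) →
          ENNReal.ofReal τ * EMetric.infEdist x {v | f v ≤ 0} ≤ epos (f x)) →
        ENNReal.ofReal τ ≤
          Filter.liminf (fun x => nslope f x)
            (nhds xb ⊓ Filter.principal {x | 0 < f x} ⊓
              Filter.comap f (nhds (0 : EReal)))) ∧
      ((∃ δ > (0 : ℝ), ∃ μ > (0 : ℝ), ∀ x ∈ EMetric.ball xb (ENNReal.ofReal δ),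
          0 < f x → f x < (μ : EReal) → ENNReal.ofReal τ ≤ nslope f x) →
        (∃ δ > (0 : ℝ), ∃ μ > (0 : ℝ), ∀ x ∈ EMetric.ball xb (ENNReal.ofReal δ),
          0 < f x → f x < (μ : EReal) →
          ENNReal.ofReal τ * EMetric.infEdist x {v | f v ≤ 0} ≤ epos (f x)))) ∧
    Filter.liminf (fun x => epos (f x) / EMetric.infEdist x {v | f v ≤ 0})
        (nhds xb ⊓ Filter.principal {x | 0 < f x}) =
      Filter.liminf (fun x => nslope f x)
        (nhds xb ⊓ Filter.principal {x | 0 < f x} ⊓ Filter.comap f (nhds (0 : EReal))) := by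
  constructor
  · intro τ hτ
    exact ⟨fun h => eb_liminf f hlsc xb hxb hτ h, fun h => slope_eb f hbot hlsc xb hxb hτ h⟩
  · set A := Filter.liminf (fun x => epos (f x) / EMetric.infEdist x {v | f v ≤ 0})
        (nhds xb ⊓ Filter.principal {x | 0 < f x}) with hA
    set B := Filter.liminf (fun x => nslope f x)
        (nhds xb ⊓ Filter.principal {x | 0 < f x} ⊓ Filter.comap f (nhds (0 : EReal))) with hB
    apply le_antisymm
    · by_contra hAB
      push_neg at hAB
      obtain ⟨r, hr0, hBr, hrA⟩ := ENNReal.lt_iff_exists_real_btwn.1 hAB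
      have hrpos : 0 < r := by
        rcases lt_or_eq_of_le hr0 with h | h
        · exact h
        · rw [← h, ENNReal.ofReal_zero] at hBr
          exact absurd hBr (not_lt.2 (zero_le))
      have hev : ∀ᶠ x in nhds xb ⊓ Filter.principal {x | 0 < f x},
          ENNReal.ofReal r < epos (f x) / EMetric.infEdist x {v | f v ≤ 0} :=
        Filter.eventually_lt_of_lt_liminf hrA
      obtain ⟨δ, hδ, hb⟩ := exists_of_eventually1 f xb hev
      have hEB : ∃ δ > (0:ℝ), ∃ μ > (0:ℝ), ∀ x ∈ EMetric.ball xb (ENNReal.ofReal δ),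
          0 < f x → f x < (μ : EReal) →
          ENNReal.ofReal r * EMetric.infEdist x {v | f v ≤ 0} ≤ epos (f x) :=
        ⟨δ, hδ, 1, one_pos, fun x hx hfx _ =>
          ENNReal.mul_le_of_le_div (le_of_lt (hb x hx hfx))⟩
      have hle := eb_liminf f hlsc xb hxb hrpos hEB
      exact absurd hle (not_le.2 hBr)
    · by_contra hBA
      push_neg at hBA
      obtain ⟨r, hr0, hAr, hrB⟩ := ENNReal.lt_iff_exists_real_btwn.1 hBA
      have hrpos : 0 < r := by
        rcases lt_or_eq_of_le hr0 with h | h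
        · exact h
        · rw [← h, ENNReal.ofReal_zero] at hAr
          exact absurd hAr (not_lt.2 (zero_le))
      have hev : ∀ᶠ x in nhds xb ⊓ Filter.principal {x | 0 < f x} ⊓
          Filter.comap f (nhds (0 : EReal)), ENNReal.ofReal r < nslope f x :=
        Filter.eventually_lt_of_lt_liminf hrB
      obtain ⟨δ0, hδ0, μ0, hμ0, hH⟩ := exists_of_eventually2 f hbot xb hev
      obtain ⟨δ, hδ, μ, hμ, hEB⟩ := slope_eb f hbot hlsc xb hxb hrpos
        ⟨δ0, hδ0, μ0, hμ0, fun x hx h1 h2 => le_of_lt (hH x hx h1 h2)⟩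
      have hδμ : 0 < min δ (μ/r) := lt_min hδ (div_pos hμ hrpos)
      have key : ∀ x ∈ EMetric.ball xb (ENNReal.ofReal (min δ (μ/r))), 0 < f x →
          ENNReal.ofReal r ≤ epos (f x) / EMetric.infEdist x {v | f v ≤ 0} := by
        intro x hx hfx
        have hSc : IsClosed {v | f v ≤ 0} := hlsc.isClosed_preimage (0:EReal)
        have hxS : x ∉ {v | f v ≤ 0} := fun h => absurd hfx (not_lt.2 h)
        have hD0 : EMetric.infEdist x {v | f v ≤ 0} ≠ 0 := by
          rw [← pos_iff_ne_zero, show ∀ (y : X) (T : Set X), EMetric.infEdist y T = Metric.infEDist y T from fun _ _ => rfl,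
      EMetric.infEdist_pos_iff_notMem_closure]
          rwa [hSc.closure_eq]
        have hDle : EMetric.infEdist x {v | f v ≤ 0} ≤ edist x xb :=
          EMetric.infEdist_le_edist_of_mem hxb
        have hDt : EMetric.infEdist x {v | f v ≤ 0} ≠ ⊤ :=
          ne_top_of_le_ne_top (edist_ne_top x xb) hDle
        rw [ENNReal.le_div_iff_mul_le (Or.inl hD0) (Or.inl hDt)]
        by_cases hcase : f x < (μ : EReal)
        · exact hEB x (EMetric.ball_subset_ball
            (ENNReal.ofReal_le_ofReal (min_le_left _ _)) hx) hfx hcase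
        · push_neg at hcase
          have h1 : ENNReal.ofReal μ ≤ epos (f x) := by
            calc ENNReal.ofReal μ = epos ((μ:ℝ):EReal) := (epos_coe μ).symm
              _ ≤ epos (f x) := epos_mono hcase
          have h2 : edist x xb ≤ ENNReal.ofReal (μ/r) := by
            have h3 := EMetric.mem_ball.1 hx
            exact le_of_lt (lt_of_lt_of_le h3 (ENNReal.ofReal_le_ofReal (min_le_right _ _)))
          calc ENNReal.ofReal r * EMetric.infEdist x {v | f v ≤ 0}
              ≤ ENNReal.ofReal r * ENNReal.ofReal (μ/r) :=
                mul_le_mul_right (le_trans hDle h2) _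
            _ = ENNReal.ofReal (r * (μ/r)) := (ENNReal.ofReal_mul hrpos.le).symm
            _ = ENNReal.ofReal μ := by rw [mul_div_cancel₀ _ (ne_of_gt hrpos)]
            _ ≤ epos (f x) := h1
      have hle : ENNReal.ofReal r ≤ A :=
        Filter.le_liminf_of_le (by isBoundedDefault) (eventually_of_ball1 f xb hδμ key)
      exact absurd hle (not_le.2 hAr)
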